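/- Let A be an n×n complex matrix and B an n×m complex matrix. If the image of A^n is contained in the image of the controllability matrix [B, AB, ..., A^{n−1}B], then for every nonzero λ ∈ ℂ the block matrix [λI − A, B] has rank n. -/

import Mathlib

open Matrix

/-- Controllability-type matrix `[B, AB, ..., A^{N-1}B]` indexed by `Fin N × Fin m`. -/
noncomputable def ctrbMatrix {n m : ℕ} (A : Matrix (Fin n) (Fin n) ℂ)
    (B : Matrix (Fin n) (Fin m) ℂ) (N : ℕ) : Matrix (Fin n) (Fin N × Fin m) ℂ :=
  fun i p => (A ^ (p.1 : ℕ) * B) i p.2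

theorem stmt1 {n m : ℕ} (A : Matrix (Fin n) (Fin n) ℂ) (B : Matrix (Fin n) (Fin m) ℂ)
    (h : LinearMap.range ((A ^ n).mulVecLin) ≤
      LinearMap.range ((ctrbMatrix A B n).mulVecLin)) :
    ∀ lam : ℂ, lam ≠ 0 →
      (Matrix.fromCols (lam • (1 : Matrix (Fin n) (Fin n) ℂ) - A) B).rank = n := by
  intro lam hlam
  set M := Matrix.fromCols (lam • (1 : Matrix (Fin n) (Fin n) ℂ) - A) B with hM
  -- key: any left null vector of M is zero
  have key : ∀ x : Fin n → ℂ, x ᵥ* M = 0 → x = 0 := by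
    intro x hx
    rw [hM, vecMul_fromCols] at hx
    have h1 : x ᵥ* (lam • (1 : Matrix (Fin n) (Fin n) ℂ) - A) = 0 :=
      funext fun i => congrFun hx (Sum.inl i)
    have hB : x ᵥ* B = 0 := funext fun j => congrFun hx (Sum.inr j)
    have hA : x ᵥ* A = lam • x := by
      have h2 := sub_eq_zero.mp (by rwa [vecMul_sub] at h1)
      have h3 : x ᵥ* (lam • (1 : Matrix (Fin n) (Fin n) ℂ)) = lam • x := by
        ext j
        simp [vecMul, dotProduct, Matrix.one_apply, mul_comm]
      rw [← h2, h3]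
    have hpow : ∀ k : ℕ, x ᵥ* (A ^ k) = lam ^ k • x := by
      intro k
      induction k with
      | zero => simp
      | succ k ih =>
        rw [pow_succ, ← vecMul_vecMul, ih, smul_vecMul, hA, smul_smul, ← pow_succ]
    have hc : x ᵥ* (ctrbMatrix A B n) = 0 := by
      funext p
      have : (x ᵥ* (ctrbMatrix A B n)) p = (x ᵥ* (A ^ (p.1 : ℕ) * B)) p.2 := by
        simp [vecMul, dotProduct, ctrbMatrix]
      rw [this, ← vecMul_vecMul, hpow, smul_vecMul, hB]
      simp
    have hAn : x ᵥ* (A ^ n) = 0 := by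
      funext j
      have hmem : (A ^ n) *ᵥ (Pi.single j 1) ∈
          LinearMap.range ((ctrbMatrix A B n).mulVecLin) :=
        h ⟨Pi.single j 1, rfl⟩
      obtain ⟨w, hw⟩ := hmem
      have : x ⬝ᵥ ((A ^ n) *ᵥ (Pi.single j 1)) = 0 := by
        rw [← hw]
        show x ⬝ᵥ ((ctrbMatrix A B n) *ᵥ w) = 0
        rw [dotProduct_mulVec, hc, zero_dotProduct]
      rw [dotProduct_mulVec] at this
      simpa using this
    rw [hpow n] at hAn
    rcases smul_eq_zero.mp hAn with h0 | h0
    · exact absurd h0 (pow_ne_zero n hlam)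
    · exact h0
  -- injectivity of the transpose linear map
  have hker : LinearMap.ker (Mᵀ.mulVecLin) = ⊥ := by
    rw [LinearMap.ker_eq_bot']
    intro x hx
    apply key
    rw [← mulVec_transpose]
    exact hx
  have h1 := LinearMap.finrank_range_add_finrank_ker (Mᵀ.mulVecLin)
  rw [hker, finrank_bot, add_zero, Module.finrank_fin_fun] at h1
  rw [← M.rank_transpose]
  exact h1
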